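/- Alpha-equivalent terms have the same support: if t ≈ u, then for every name a, a # t if and only if a # u. -/

import Mathlib

inductive Term (A C F : Type) : Type where
  | name : A → Term A C F
  | const : C → Term A C F
  | fn : F → List (Term A C F) → Term A C F
  | abs : A → Term A C F → Term A C F

variable {A C F : Type} [DecidableEq A]

def swapName (a b c : A) : A := if c = a then b else if c = b then a else c

def Term.swap (a b : A) : Term A C F → Term A C F
  | .name c => .name (swapName a b c)
  | .const c => .const c
  | .fn f ts => .fn f (ts.attach.map (fun x => Term.swap a b x.1))
  | .abs c t => .abs (swapName a b c) (Term.swap a b t)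
termination_by t => sizeOf t
decreasing_by all_goals (simp_wf; try omega)
              · have := List.sizeOf_lt_of_mem x.2; omega

inductive Term.Fresh : A → Term A C F → Prop where
  | name {a b : A} : a ≠ b → Term.Fresh a (.name b)
  | const {a : A} {c : C} : Term.Fresh a (.const c)
  | fn {a : A} {f : F} {ts : List (Term A C F)} :
      (∀ t ∈ ts, Term.Fresh a t) → Term.Fresh a (.fn f ts)
  | abs_neq {a b : A} {t : Term A C F} :
      a ≠ b → Term.Fresh a t → Term.Fresh a (.abs b t)
  | abs_same {a : A} {t : Term A C F} : Term.Fresh a (.abs a t)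

inductive Term.Aeq : Term A C F → Term A C F → Prop where
  | name {a : A} : Term.Aeq (.name a) (.name a)
  | const {c : C} : Term.Aeq (.const c) (.const c)
  | fn {f : F} {ts us : List (Term A C F)} :
      List.Forall₂ Term.Aeq ts us → Term.Aeq (.fn f ts) (.fn f us)
  | abs_same {a : A} {t u : Term A C F} :
      Term.Aeq t u → Term.Aeq (.abs a t) (.abs a u)
  | abs_diff {a b : A} {t u : Term A C F} :
      Term.Fresh a u → Term.Aeq t (u.swap a b) → Term.Aeq (.abs a t) (.abs b u)

set_option linter.unusedSectionVars false

lemma fresh_fn_iff {a : A} {f : F} {ts : List (Term A C F)} :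
    Term.Fresh a (.fn f ts) ↔ ∀ t ∈ ts, Term.Fresh a t := by
  constructor
  · intro h; cases h; assumption
  · exact .fn

lemma fresh_abs_iff {a b : A} {t : Term A C F} :
    Term.Fresh a (.abs b t) ↔ a = b ∨ (a ≠ b ∧ Term.Fresh a t) := by
  constructor
  · intro h; cases h with
    | abs_neq hne h => exact Or.inr ⟨hne, h⟩
    | abs_same => exact Or.inl rfl
  · rintro (rfl | ⟨hne, h⟩)
    · exact .abs_same
    · exact .abs_neq hne h

lemma fresh_name_iff {a b : A} :
    Term.Fresh a (Term.name b : Term A C F) ↔ a ≠ b := by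
  constructor
  · intro h; cases h; assumption
  · exact .name

lemma swapName_swapName (a b c : A) : swapName a b (swapName a b c) = c := by
  unfold swapName; split_ifs <;> simp_all

lemma swap_fn (a b : A) (f : F) (ts : List (Term A C F)) :
    Term.swap a b (.fn f ts) = .fn f (ts.map (Term.swap a b)) := by
  rw [Term.swap]; simp [List.attach, List.attachWith, List.map_pmap]

theorem fresh_swap (a b c : A) : ∀ t : Term A C F,
    Term.Fresh c (t.swap a b) ↔ Term.Fresh (swapName a b c) t
  | .name d => by
      rw [Term.swap, fresh_name_iff, fresh_name_iff]
      unfold swapName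
      split_ifs <;> simp_all <;> tauto
  | .const d => by
      rw [Term.swap]; constructor <;> (intro; exact .const)
  | .fn f ts => by
      have key : ∀ s ∈ ts, (Term.Fresh c (s.swap a b) ↔ Term.Fresh (swapName a b c) s) :=
        fun s hs => fresh_swap a b c s
      rw [swap_fn, fresh_fn_iff, fresh_fn_iff]
      constructor
      · intro h t ht
        exact (key t ht).mp (h _ (List.mem_map_of_mem ht))
      · intro h t ht
        obtain ⟨s, hs, rfl⟩ := List.mem_map.mp ht
        exact (key s hs).mpr (h _ hs)
  | .abs d t => by
      rw [Term.swap, fresh_abs_iff, fresh_abs_iff, fresh_swap a b c t]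
      constructor
      · rintro (h | ⟨hne, h⟩)
        · left; rw [h, swapName_swapName]
        · right
          refine ⟨fun e => hne ?_, h⟩
          rw [← e, swapName_swapName]
      · rintro (h | ⟨hne, h⟩)
        · left; rw [← h, swapName_swapName]
        · right
          refine ⟨fun e => hne ?_, h⟩
          rw [e, swapName_swapName]
termination_by t => sizeOf t
decreasing_by all_goals simp_wf <;> try omega
              · have := List.sizeOf_lt_of_mem hs; omega

lemma forall₂_iff_helper {a : A} : ∀ (ts us : List (Term A C F)),
    List.Forall₂ Term.Aeq ts us →
    (∀ x ∈ ts, ∀ y, x.Aeq y → (Term.Fresh a x ↔ Term.Fresh a y)) →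
    ((∀ x ∈ ts, Term.Fresh a x) ↔ (∀ y ∈ us, Term.Fresh a y)) := by
  intro ts us h key
  induction h with
  | nil => simp
  | cons hxy htail ih =>
      rename_i x y ts' us'
      simp only [List.mem_cons, forall_eq_or_imp]
      rw [key x (by simp) y hxy, ih (fun x hx => key x (by simp [hx]))]

theorem aeq_fresh : ∀ (t u : Term A C F), t.Aeq u → ∀ a, Term.Fresh a t ↔ Term.Fresh a u := by
  intro t u h a
  cases h with
  | name => exact Iff.rfl
  | const => exact Iff.rfl
  | fn hf =>
      rename_i f ts us
      rw [fresh_fn_iff, fresh_fn_iff]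
      exact forall₂_iff_helper ts us hf
        (fun x hx y hxy => aeq_fresh x y hxy a)
  | abs_same h' =>
      rename_i b t' u'
      rw [fresh_abs_iff, fresh_abs_iff, aeq_fresh t' u' h' a]
  | abs_diff hfr h' =>
      rename_i b c t' u'
      rw [fresh_abs_iff, fresh_abs_iff, aeq_fresh t' (u'.swap b c) h' a, fresh_swap]
      have hswap : ∀ d : A, Term.Fresh (if d = b then d else b) u' := by
        intro d; split_ifs with h
        · rw [h]; exact hfr
        · exact hfr
      by_cases hab : a = b <;> by_cases hac : a = c <;>
        simp [swapName, hab, hac, hfr, hswap] <;> tauto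
termination_by t _ _ _ => sizeOf t
decreasing_by all_goals simp_wf <;> try omega
              · have := List.sizeOf_lt_of_mem hx; omega

theorem aeq_same_support {t u : Term A C F} (h : t.Aeq u) (a : A) :
    t.Fresh a ↔ u.Fresh a := aeq_fresh t u h a
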